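/- Let F : ℝ^n → ℝ be a polynomial eigenfunction of the Ornstein–Uhlenbeck operator with ℒF = -kF (k ≥ 1 an integer) which is also a homogeneous polynomial of degree k. Then sup_{u ∈ S^{n-1}} |F(u)| ≤ (1/√(k!)) · (∫_{ℝ^n} F² dγ_n)^{1/2}. -/

import Mathlib

open MeasureTheory MvPolynomial

/-- The standard Gaussian measure on `ℝ^n` (as `Fin n → ℝ`). -/
noncomputable def stdGaussian (n : ℕ) : Measure (Fin n → ℝ) :=
  Measure.pi fun _ => ProbabilityTheory.gaussianReal 0 1

/-- The Ornstein–Uhlenbeck generator `ℒf = Δf - ⟨x, ∇f⟩` acting on polynomials. -/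
noncomputable def OU (n : ℕ) (P : MvPolynomial (Fin n) ℝ) : MvPolynomial (Fin n) ℝ :=
  ∑ i : Fin n, (pderiv i (pderiv i P) - X i * pderiv i P)

namespace SupSphere

open Real Filter
open scoped NNReal ENNReal


noncomputable def gw (x : ℝ) : ℝ := Real.exp (-(x^2/2))

lemma pow_le_factorial_mul_exp {t : ℝ} (ht : 0 ≤ t) (p : ℕ) :
    t ^ p ≤ p.factorial * Real.exp t := by
  have h := Real.sum_le_exp_of_nonneg ht (p+1)
  have h2 : t ^ p / p.factorial ≤ ∑ i ∈ Finset.range (p+1), t ^ i / i.factorial := by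
    exact Finset.single_le_sum (f := fun i => t ^ i / (i.factorial : ℝ))
      (fun i _ => by positivity) (Finset.self_mem_range_succ p)
  have hp : (0:ℝ) < p.factorial := by exact_mod_cast p.factorial_pos
  have := h2.trans h
  rw [div_le_iff₀ hp] at this
  linarith

lemma pow_mul_gw_le (p : ℕ) (x : ℝ) :
    |x ^ p * gw x| ≤ Real.exp (-(x^2/2)) + p.factorial * 4^p * Real.exp (-(x^2/4)) := by
  have hgw : 0 < gw x := Real.exp_pos _
  have h1 : |x ^ p * gw x| = |x| ^ p * gw x := by
    rw [abs_mul, abs_pow, abs_of_pos hgw]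
  rw [h1]
  have h2 : |x| ^ p ≤ 1 + (x^2) ^ p := by
    rcases le_total |x| 1 with h | h
    · have : |x| ^ p ≤ 1 := pow_le_one₀ (abs_nonneg x) h
      nlinarith [pow_nonneg (sq_nonneg x) p]
    · have : |x| ^ p ≤ (x^2) ^ p := by
        apply pow_le_pow_left₀ (abs_nonneg x)
        nlinarith [abs_nonneg x, sq_abs x]
      linarith
  have h3 : (x^2) ^ p * gw x ≤ p.factorial * 4^p * Real.exp (-(x^2/4)) := by
    have h4 : (x^2/4) ^ p ≤ p.factorial * Real.exp (x^2/4) :=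
      pow_le_factorial_mul_exp (by positivity) p
    have h5 : (x^2) ^ p ≤ p.factorial * 4^p * Real.exp (x^2/4) := by
      have : (x^2) ^ p = 4^p * (x^2/4) ^ p := by
        rw [← mul_pow]; ring_nf
      rw [this]
      calc (4:ℝ)^p * (x^2/4)^p ≤ 4^p * (p.factorial * Real.exp (x^2/4)) := by
            apply mul_le_mul_of_nonneg_left h4 (by positivity)
        _ = p.factorial * 4^p * Real.exp (x^2/4) := by ring
    calc (x^2) ^ p * gw x ≤ (p.factorial * 4^p * Real.exp (x^2/4)) * gw x := by
          apply mul_le_mul_of_nonneg_right h5 hgw.le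
      _ = p.factorial * 4^p * Real.exp (-(x^2/4)) := by
          unfold gw
          rw [mul_assoc, ← Real.exp_add]
          ring_nf
  have : (1 + (x^2)^p) * gw x = gw x + (x^2)^p * gw x := by ring
  calc |x| ^ p * gw x ≤ (1 + (x^2)^p) * gw x :=
        mul_le_mul_of_nonneg_right h2 hgw.le
    _ = gw x + (x^2)^p * gw x := by ring
    _ ≤ Real.exp (-(x^2/2)) + p.factorial * 4^p * Real.exp (-(x^2/4)) := by
        unfold gw; exact add_le_add le_rfl h3

lemma integrable_exp_neg_sq_div (c : ℝ) (hc : 0 < c) :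
    Integrable (fun x : ℝ => Real.exp (-(x^2/c))) := by
  have := integrable_exp_neg_mul_sq (b := 1/c) (by positivity)
  convert this using 2 with x
  ring_nf

lemma integrable_bound (p : ℕ) :
    Integrable (fun x : ℝ => Real.exp (-(x^2/2)) + p.factorial * 4^p * Real.exp (-(x^2/4))) :=
  (integrable_exp_neg_sq_div 2 (by norm_num)).add
    ((integrable_exp_neg_sq_div 4 (by norm_num)).const_mul _)

lemma integrable_pow_mul_gw (p : ℕ) : Integrable (fun x : ℝ => x ^ p * gw x) := by
  refine (integrable_bound p).mono' ?_ (Eventually.of_forall (pow_mul_gw_le p))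
  exact ((continuous_pow p).mul (Real.continuous_exp.comp (by continuity))).aestronglyMeasurable

lemma tendsto_pow_mul_gw (p : ℕ) (l : Filter ℝ)
    (hl : Tendsto (fun x : ℝ => x^2) l atTop) :
    Tendsto (fun x : ℝ => x ^ p * gw x) l (nhds 0) := by
  apply squeeze_zero_norm (pow_mul_gw_le p)
  have key : ∀ c : ℝ, 0 < c → Tendsto (fun x : ℝ => Real.exp (-(x^2/c))) l (nhds 0) := by
    intro c hc
    apply Real.tendsto_exp_atBot.comp
    apply tendsto_neg_atBot_iff.mpr
    exact (tendsto_id.atTop_div_const hc).comp hl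
  have := ((key 2 (by norm_num)).add (((key 4 (by norm_num)).const_mul (p.factorial * 4^p : ℝ))))
  simpa using this


noncomputable def gm : ℕ → ℝ
  | 0 => 1
  | 1 => 0
  | (p+2) => (p+1) * gm p

noncomputable def J (p : ℕ) : ℝ := ∫ x : ℝ, x ^ p * gw x

lemma hasDerivAt_gw (x : ℝ) : HasDerivAt gw (-x * gw x) x := by
  have h0 : HasDerivAt (fun y : ℝ => -(y^2/2)) (-x) x := by
    have : HasDerivAt (fun y : ℝ => -(y^2/2)) _ x := ((hasDerivAt_pow 2 x).div_const 2).neg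
    simpa using this
  have : HasDerivAt gw _ x := h0.exp
  simpa [gw, mul_comm] using this

lemma hasDerivAt_pow_gw (p : ℕ) (x : ℝ) :
    HasDerivAt (fun y : ℝ => y ^ (p+1) * gw y)
      (((p:ℝ)+1) * (x ^ p * gw x) - x ^ (p+2) * gw x) x := by
  have h1 : HasDerivAt (fun y : ℝ => y ^ (p+1)) (((p:ℝ)+1) * x ^ p) x := by
    simpa using hasDerivAt_pow (p+1) x
  have : HasDerivAt (fun y : ℝ => y ^ (p+1) * gw y) _ x := h1.mul (hasDerivAt_gw x)
  convert this using 1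
  ring

lemma integral_deriv_zero (f f' : ℝ → ℝ) (hd : ∀ x, HasDerivAt f (f' x) x)
    (hi : Integrable f') (ht : Tendsto f atTop (nhds 0))
    (hb : Tendsto f atBot (nhds 0)) : ∫ x, f' x = 0 := by
  have h1 : ∫ x in Set.Ioi (0:ℝ), f' x = 0 - f 0 :=
    integral_Ioi_of_hasDerivAt_of_tendsto (hd 0).continuousAt.continuousWithinAt
      (fun x _ => hd x) hi.integrableOn ht
  have h2 : ∫ x in Set.Iic (0:ℝ), f' x = f 0 - 0 :=
    integral_Iic_of_hasDerivAt_of_tendsto (hd 0).continuousAt.continuousWithinAt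
      (fun x _ => hd x) hi.integrableOn hb
  rw [← intervalIntegral.integral_Iic_add_Ioi (b := (0:ℝ)) hi.integrableOn hi.integrableOn, h1, h2]
  ring

lemma sq_tendsto_atTop : Tendsto (fun x : ℝ => x^2) atTop atTop :=
  tendsto_pow_atTop two_ne_zero

lemma sq_tendsto_atBot : Tendsto (fun x : ℝ => x^2) atBot atTop := by
  have h := sq_tendsto_atTop.comp tendsto_neg_atBot_atTop
  refine h.congr fun x => by simp [Function.comp]

lemma J_rec (p : ℕ) : J (p+2) = ((p:ℝ)+1) * J p := by
  have h0 : ∫ x : ℝ, (((p:ℝ)+1) * (x ^ p * gw x) - x ^ (p+2) * gw x) = 0 :=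
    integral_deriv_zero _ _ (hasDerivAt_pow_gw p)
      (((integrable_pow_mul_gw p).const_mul _).sub (integrable_pow_mul_gw (p+2)))
      (tendsto_pow_mul_gw (p+1) atTop sq_tendsto_atTop)
      (tendsto_pow_mul_gw (p+1) atBot sq_tendsto_atBot)
  rw [integral_sub ((integrable_pow_mul_gw p).const_mul _) (integrable_pow_mul_gw (p+2))] at h0
  rw [show (fun x : ℝ => ((p:ℝ)+1) * (x ^ p * gw x)) = fun x : ℝ => ((p:ℝ)+1) • (x ^ p * gw x) from rfl,
    integral_smul, smul_eq_mul] at h0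
  unfold J
  linarith

lemma J_zero : J 0 = Real.sqrt (2*π) := by
  unfold J
  have : (fun x : ℝ => x ^ 0 * gw x) = fun x : ℝ => Real.exp (-(1/2:ℝ) * x^2) := by
    funext x; simp [gw]; ring_nf
  rw [this, integral_gaussian]
  rw [show π / (1/2) = 2 * π by ring]

lemma J_one : J 1 = 0 := by
  have h0 : ∫ x : ℝ, x * gw x = 0 := by
    apply integral_deriv_zero (fun y => -gw y) _ (fun x => by exact (hasDerivAt_gw x).neg.congr_deriv (by ring))
    · simpa using integrable_pow_mul_gw 1
    · simpa using (tendsto_pow_mul_gw 0 atTop sq_tendsto_atTop).neg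
    · simpa using (tendsto_pow_mul_gw 0 atBot sq_tendsto_atBot).neg
  unfold J
  simpa using h0

lemma J_eq : ∀ p, J p = gm p * Real.sqrt (2*π)
  | 0 => by rw [J_zero, gm]; ring
  | 1 => by rw [J_one, gm]; ring
  | (p+2) => by rw [J_rec, J_eq p, gm]; ring


open ProbabilityTheory

noncomputable def pdfN : ℝ → ℝ≥0 := fun x => (gaussianPDFReal 0 1 x).toNNReal

lemma pdfN_meas : Measurable pdfN := (measurable_gaussianPDFReal 0 1).real_toNNReal

lemma gaussianReal_eq : gaussianReal 0 1 = volume.withDensity (fun x => (pdfN x : ℝ≥0∞)) := by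
  rw [gaussianReal_of_var_ne_zero 0 one_ne_zero]
  rfl

lemma sqrt2pi_pos : 0 < Real.sqrt (2*π) := Real.sqrt_pos.mpr (by positivity)

lemma pdfN_coe (x : ℝ) : (pdfN x : ℝ) = (Real.sqrt (2*π))⁻¹ * gw x := by
  rw [pdfN, Real.coe_toNNReal _ (gaussianPDFReal_nonneg 0 1 x), gaussianPDFReal]
  have h1 : ((1:ℝ≥0):ℝ) = 1 := rfl
  rw [h1, gw]
  rw [sub_zero, mul_one]
  congr 2
  ring

lemma integral_gaussianReal_eq (g : ℝ → ℝ) :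
    ∫ x, g x ∂(gaussianReal 0 1) = ∫ x, (pdfN x : ℝ) * g x := by
  rw [gaussianReal_eq, integral_withDensity_eq_integral_smul pdfN_meas]
  simp [NNReal.smul_def]

lemma integrable_gaussianReal_iff (g : ℝ → ℝ) :
    Integrable g (gaussianReal 0 1) ↔ Integrable (fun x => (pdfN x : ℝ) * g x) volume := by
  rw [gaussianReal_eq]
  rw [integrable_withDensity_iff_integrable_smul (μ := volume) (g := g) pdfN_meas]
  exact integrable_congr (Eventually.of_forall fun x => by simp [NNReal.smul_def])

lemma pdfN_mul_pow (p : ℕ) : (fun x : ℝ => (pdfN x : ℝ) * x ^ p)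
    = fun x : ℝ => (Real.sqrt (2*π))⁻¹ * (x ^ p * gw x) := by
  funext x
  rw [pdfN_coe]
  ring

lemma integrable_pow_gaussian (p : ℕ) : Integrable (fun x : ℝ => x ^ p) (gaussianReal 0 1) := by
  rw [integrable_gaussianReal_iff, pdfN_mul_pow]
  exact (integrable_pow_mul_gw p).const_mul _

lemma integral_pow_gaussian (p : ℕ) : ∫ x, x ^ p ∂(gaussianReal 0 1) = gm p := by
  rw [integral_gaussianReal_eq, pdfN_mul_pow]
  rw [show (fun x : ℝ => (Real.sqrt (2*π))⁻¹ * (x ^ p * gw x))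
      = fun x : ℝ => (Real.sqrt (2*π))⁻¹ • (x ^ p * gw x) from rfl, integral_smul, smul_eq_mul]
  have : ∫ x : ℝ, x ^ p * gw x = J p := rfl
  rw [this, J_eq]
  field_simp



section Multi

noncomputable local instance realGaussianSpace : MeasureSpace ℝ :=
  ⟨ProbabilityTheory.gaussianReal 0 1⟩

noncomputable local instance : SigmaFinite (volume : Measure ℝ) := by
  change SigmaFinite (ProbabilityTheory.gaussianReal 0 1)
  infer_instance

lemma volume_pi_eq (n : ℕ) : (volume : Measure (Fin n → ℝ)) = stdGaussian n := rfl

lemma integrable_monomial (n : ℕ) (d : Fin n → ℕ) :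
    Integrable (fun x : Fin n → ℝ => ∏ i, (x i) ^ (d i)) (stdGaussian n) := by
  rw [← volume_pi_eq]
  exact Integrable.fintype_prod (f := fun i (t : ℝ) => t ^ (d i))
    (fun i => integrable_pow_gaussian (d i))

lemma integral_monomial (n : ℕ) (d : Fin n → ℕ) :
    ∫ x, (∏ i, (x i) ^ (d i)) ∂(stdGaussian n) = ∏ i, gm (d i) := by
  rw [← volume_pi_eq, volume_pi]
  rw [MeasureTheory.integral_fintype_prod_eq_prod (ι := Fin n)
    (f := fun i (t : ℝ) => t ^ (d i))]
  exact Finset.prod_congr rfl fun i _ => integral_pow_gaussian (d i)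

end Multi

section Algebraic
open MvPolynomial

noncomputable def gI (n : ℕ) (P : MvPolynomial (Fin n) ℝ) : ℝ := ∫ x, eval x P ∂(stdGaussian n)

variable {n : ℕ}

lemma integrable_eval (P : MvPolynomial (Fin n) ℝ) :
    Integrable (fun x => eval x P) (stdGaussian n) := by
  have h : (fun x : Fin n → ℝ => eval x P)
      = fun x => ∑ d ∈ P.support, P.coeff d * ∏ i, x i ^ d i := by
    funext x; rw [eval_eq']
  rw [h]
  refine integrable_finset_sum _ (fun d _ => ?_)
  have := (integrable_monomial n (fun i => d i)).const_mul (P.coeff d)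
  simpa using this

lemma gI_monomial (d : Fin n →₀ ℕ) (c : ℝ) :
    gI n (monomial d c) = c * ∏ i, gm (d i) := by
  unfold gI
  have h : (fun x : Fin n → ℝ => eval x (monomial d c))
      = fun x => c • ∏ i, x i ^ d i := by
    funext x
    rw [eval_monomial, smul_eq_mul]
    congr 1
    exact Finsupp.prod_fintype _ _ (fun i => pow_zero _)
  rw [h, integral_smul, integral_monomial, smul_eq_mul]

lemma gI_zero : gI n 0 = 0 := by unfold gI; simp

lemma gI_add (P Q : MvPolynomial (Fin n) ℝ) : gI n (P + Q) = gI n P + gI n Q := by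
  unfold gI
  rw [← integral_add (integrable_eval P) (integrable_eval Q)]
  congr 1; funext x; simp

lemma gI_smul (c : ℝ) (P : MvPolynomial (Fin n) ℝ) : gI n (c • P) = c * gI n P := by
  unfold gI
  rw [show (fun x : Fin n → ℝ => eval x (c • P)) = fun x => c • eval x P from
    funext fun x => by rw [smul_eval, smul_eq_mul], integral_smul, smul_eq_mul]

lemma gI_sub (P Q : MvPolynomial (Fin n) ℝ) : gI n (P - Q) = gI n P - gI n Q := by
  unfold gI
  rw [← integral_sub (integrable_eval P) (integrable_eval Q)]
  congr 1; funext x; simp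

lemma gI_sum {α : Type*} (s : Finset α) (f : α → MvPolynomial (Fin n) ℝ) :
    gI n (∑ a ∈ s, f a) = ∑ a ∈ s, gI n (f a) := by
  classical
  induction s using Finset.induction_on with
  | empty => simp [gI_zero]
  | @insert a s' ha ih =>
      rw [Finset.sum_insert ha, Finset.sum_insert ha, gI_add, ih]

lemma gI_sq_nonneg (P : MvPolynomial (Fin n) ℝ) : 0 ≤ gI n (P * P) := by
  unfold gI
  apply integral_nonneg
  intro x
  simp only [map_mul]
  exact mul_self_nonneg _

lemma gm_succ (a : ℕ) : gm (a + 1) = a * gm (a - 1) := by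
  cases a with
  | zero => simp [gm]
  | succ b => rw [show b + 1 + 1 = b + 2 from rfl, gm]; simp

lemma gI_pderiv (i : Fin n) (P : MvPolynomial (Fin n) ℝ) :
    gI n (pderiv i P) = gI n (X i * P) := by
  conv_lhs => rw [← support_sum_monomial_coeff P]
  conv_rhs => rw [← support_sum_monomial_coeff P]
  rw [map_sum, Finset.mul_sum, gI_sum, gI_sum]
  refine Finset.sum_congr rfl (fun d _ => ?_)
  rw [pderiv_monomial]
  rw [show X i * monomial d (P.coeff d) = monomial (d + Finsupp.single i 1) (P.coeff d) by
    rw [X, monomial_mul, one_mul, add_comm]]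
  rw [gI_monomial, gI_monomial]
  rw [← Finset.mul_prod_erase Finset.univ _ (Finset.mem_univ i)]
  rw [← Finset.mul_prod_erase Finset.univ _ (Finset.mem_univ i)]
  have herase : ∀ j ∈ Finset.univ.erase i,
      gm (((d - Finsupp.single i 1) : Fin n →₀ ℕ) j) = gm (((d + Finsupp.single i 1) : Fin n →₀ ℕ) j) := by
    intro j hj
    have hne : j ≠ i := Finset.ne_of_mem_erase hj
    rw [Finsupp.tsub_apply, Finsupp.add_apply, Finsupp.single_apply, if_neg (Ne.symm hne)]
    simp
  rw [Finset.prod_congr rfl herase]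
  have hi1 : ((d - Finsupp.single i 1) : Fin n →₀ ℕ) i = d i - 1 := by
    rw [Finsupp.tsub_apply, Finsupp.single_apply, if_pos rfl]
  have hi2 : ((d + Finsupp.single i 1) : Fin n →₀ ℕ) i = d i + 1 := by
    rw [Finsupp.add_apply, Finsupp.single_apply, if_pos rfl]
  rw [hi1, hi2, gm_succ]
  ring


noncomputable def Du (n : ℕ) (u : Fin n → ℝ) (P : MvPolynomial (Fin n) ℝ) :
    MvPolynomial (Fin n) ℝ := ∑ i, u i • pderiv i P

noncomputable def Lu (n : ℕ) (u : Fin n → ℝ) : MvPolynomial (Fin n) ℝ :=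
  ∑ i, C (u i) * X i

noncomputable def hh (n : ℕ) (u : Fin n → ℝ) : ℕ → MvPolynomial (Fin n) ℝ
  | 0 => 1
  | (m+1) => Lu n u * hh n u m - Du n u (hh n u m)

variable {u : Fin n → ℝ}

lemma Du_add (P Q : MvPolynomial (Fin n) ℝ) :
    Du n u (P + Q) = Du n u P + Du n u Q := by
  unfold Du
  rw [← Finset.sum_add_distrib]
  exact Finset.sum_congr rfl fun i _ => by rw [map_add, smul_add]

lemma Du_smul (c : ℝ) (P : MvPolynomial (Fin n) ℝ) :
    Du n u (c • P) = c • Du n u P := by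
  unfold Du
  rw [Finset.smul_sum]
  exact Finset.sum_congr rfl fun i _ => by rw [(pderiv i).map_smul, smul_comm]

lemma Du_sub (P Q : MvPolynomial (Fin n) ℝ) :
    Du n u (P - Q) = Du n u P - Du n u Q := by
  unfold Du
  rw [← Finset.sum_sub_distrib]
  exact Finset.sum_congr rfl fun i _ => by rw [map_sub, smul_sub]

lemma Du_one : Du n u (1 : MvPolynomial (Fin n) ℝ) = 0 := by
  unfold Du
  refine Finset.sum_eq_zero fun i _ => by rw [pderiv_one, smul_zero]

lemma pderiv_Lu (i : Fin n) : pderiv i (Lu n u) = C (u i) := by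
  unfold Lu
  rw [map_sum]
  rw [Finset.sum_eq_single i]
  · rw [pderiv_C_mul, pderiv_X_self, mul_one]
  · intro j _ hj
    rw [pderiv_C_mul, pderiv_X_of_ne hj, mul_zero]
  · intro h
    exact absurd (Finset.mem_univ i) h

lemma Du_Lu_mul (hu : ∑ i, u i ^ 2 = 1) (Q : MvPolynomial (Fin n) ℝ) :
    Du n u (Lu n u * Q) = Q + Lu n u * Du n u Q := by
  unfold Du
  have expand : ∀ i : Fin n, u i • (pderiv i) (Lu n u * Q)
      = (u i • C (u i)) * Q + u i • (Lu n u * pderiv i Q) := by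
    intro i
    rw [pderiv_mul, pderiv_Lu, smul_add, smul_mul_assoc]
  rw [Finset.sum_congr rfl (fun i _ => expand i), Finset.sum_add_distrib]
  congr 1
  · rw [← Finset.sum_mul]
    have : (∑ i, u i • C (u i)) = (C 1 : MvPolynomial (Fin n) ℝ) := by
      rw [show (C 1 : MvPolynomial (Fin n) ℝ) = C (∑ i, u i ^ 2) by rw [hu], map_sum]
      refine Finset.sum_congr rfl fun i _ => ?_
      rw [smul_eq_C_mul, ← map_mul, sq]
    rw [this, C_1, one_mul]
  · rw [Finset.mul_sum]
    exact Finset.sum_congr rfl fun i _ => (mul_smul_comm _ _ _).symm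

lemma Du_hh (hu : ∑ i, u i ^ 2 = 1) :
    ∀ m, Du n u (hh n u (m+1)) = ((m : ℝ) + 1) • hh n u m
  | 0 => by
      rw [show hh n u (0+1) = Lu n u * hh n u 0 - Du n u (hh n u 0) from rfl,
        show hh n u 0 = (1 : MvPolynomial (Fin n) ℝ) from rfl,
        Du_sub, Du_Lu_mul hu, Du_one, mul_zero, add_zero]
      rw [show Du n u (0 : MvPolynomial (Fin n) ℝ) = 0 by
        unfold Du; simp]
      norm_num
  | (m+1) => by
      rw [show hh n u (m+1+1) = Lu n u * hh n u (m+1) - Du n u (hh n u (m+1)) from rfl,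
        Du_sub, Du_Lu_mul hu, Du_hh hu m, Du_smul]
      rw [mul_smul_comm, add_sub_assoc, ← smul_sub,
        show (Lu n u * hh n u m - Du n u (hh n u m)) = hh n u (m+1) from rfl]
      push_cast
      module

lemma gI_adj (P Q : MvPolynomial (Fin n) ℝ) :
    gI n (P * (Lu n u * Q - Du n u Q)) = gI n (Du n u P * Q) := by
  have key : ∀ i : Fin n, gI n (pderiv i P * Q) + gI n (P * pderiv i Q)
      = gI n (X i * (P * Q)) := by
    intro i
    have h := gI_pderiv i (P * Q)
    rw [pderiv_mul, gI_add] at h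
    exact h
  have h1 : gI n (Du n u P * Q) = ∑ i, u i * gI n (pderiv i P * Q) := by
    rw [Du, Finset.sum_mul]
    simp only [smul_mul_assoc]
    rw [gI_sum]
    exact Finset.sum_congr rfl fun i _ => gI_smul _ _
  have h2 : gI n (P * Du n u Q) = ∑ i, u i * gI n (P * pderiv i Q) := by
    rw [Du, Finset.mul_sum]
    simp only [mul_smul_comm]
    rw [gI_sum]
    exact Finset.sum_congr rfl fun i _ => gI_smul _ _
  have h3 : gI n (P * (Lu n u * Q)) = ∑ i, u i * gI n (X i * (P * Q)) := by
    have hexp : P * (Lu n u * Q) = ∑ i, u i • (X i * (P * Q)) := by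
      rw [Lu, Finset.sum_mul, Finset.mul_sum]
      refine Finset.sum_congr rfl fun i _ => ?_
      rw [smul_eq_C_mul]
      ring
    rw [hexp, gI_sum]
    exact Finset.sum_congr rfl fun i _ => gI_smul _ _
  rw [mul_sub, gI_sub, h1, h2, h3, ← Finset.sum_sub_distrib]
  refine Finset.sum_congr rfl fun i _ => ?_
  have h := key i
  have : gI n (X i * (P * Q)) = gI n ((pderiv i) P * Q) + gI n (P * (pderiv i) Q) := h.symm
  rw [this]
  ring

lemma degree_fintype (d : Fin n →₀ ℕ) : d.degree = ∑ i, d i :=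
  Finset.sum_subset (Finset.subset_univ _) (fun i _ hi => Finsupp.notMem_support_iff.mp hi)

lemma homog_degree_eq {P : MvPolynomial (Fin n) ℝ} {m : ℕ} (hP : P.IsHomogeneous m)
    {d : Fin n →₀ ℕ} (hd : d ∈ P.support) : d.degree = m := by
  by_contra h
  exact (mem_support_iff.mp hd) (hP.coeff_eq_zero h)

lemma euler {P : MvPolynomial (Fin n) ℝ} {m : ℕ} (hP : P.IsHomogeneous m) :
    ∑ i, X i * pderiv i P = m • P := by
  conv_lhs => rw [← support_sum_monomial_coeff P]
  conv_rhs => rw [← support_sum_monomial_coeff P]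
  rw [Finset.smul_sum]
  simp only [map_sum, Finset.mul_sum]
  rw [Finset.sum_comm]
  refine Finset.sum_congr rfl fun d hd => ?_
  have hdeg : ∑ i, d i = m := by rw [← degree_fintype]; exact homog_degree_eq hP hd
  calc ∑ i, X i * pderiv i (monomial d (P.coeff d))
      = ∑ i, (d i) • monomial d (P.coeff d) := by
        refine Finset.sum_congr rfl fun i _ => ?_
        rw [pderiv_monomial]
        rcases Nat.eq_zero_or_pos (d i) with h0 | hpos
        · rw [h0]; simp
        · rw [X, monomial_mul, one_mul]
          have hsum : Finsupp.single i 1 + (d - Finsupp.single i 1) = d := by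
            ext j
            rw [Finsupp.add_apply, Finsupp.tsub_apply]
            rcases eq_or_ne i j with rfl | hne
            · rw [Finsupp.single_eq_same]; omega
            · rw [Finsupp.single_eq_of_ne' hne]; omega
          rw [hsum,
            show (d i) • (monomial d) (P.coeff d) = (monomial d) ((d i) • P.coeff d) from
              (map_nsmul (monomial d) _ _).symm,
            nsmul_eq_mul, mul_comm]
    _ = (∑ i, d i) • monomial d (P.coeff d) := by rw [Finset.sum_smul]
    _ = m • monomial d (P.coeff d) := by rw [hdeg]

lemma euler_eval {P : MvPolynomial (Fin n) ℝ} {m : ℕ} (hP : P.IsHomogeneous m)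
    (u : Fin n → ℝ) : eval u (Du n u P) = m * eval u P := by
  calc eval u (Du n u P) = ∑ i, u i * eval u (pderiv i P) := by
        unfold Du
        rw [map_sum]
        exact Finset.sum_congr rfl fun i _ => by rw [smul_eval]
    _ = eval u (∑ i, X i * pderiv i P) := by
        rw [map_sum]
        exact (Finset.sum_congr rfl fun i _ => by rw [map_mul, eval_X]).symm
    _ = eval u (m • P) := by rw [euler hP]
    _ = m * eval u P := by rw [map_nsmul, nsmul_eq_mul]

lemma isHomog_pderiv {P : MvPolynomial (Fin n) ℝ} {m : ℕ} (hP : P.IsHomogeneous (m+1))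
    (i : Fin n) : (pderiv i P).IsHomogeneous m := by
  conv_lhs => rw [← support_sum_monomial_coeff P]
  rw [map_sum]
  apply IsHomogeneous.sum
  intro d hd
  rw [pderiv_monomial]
  rcases Nat.eq_zero_or_pos (d i) with h0 | hpos
  · rw [h0]
    simp only [Nat.cast_zero, mul_zero]
    rw [show (monomial (d - Finsupp.single i 1)) (0:ℝ) = 0 from map_zero _]
    exact isHomogeneous_zero _ _ _
  · apply isHomogeneous_monomial
    have hdeg : d.degree = m + 1 := homog_degree_eq hP hd
    rw [degree_fintype] at hdeg ⊢
    have happ : ∀ j, ((d - Finsupp.single i 1) : Fin n →₀ ℕ) j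
        = d j - (Finsupp.single i 1) j := fun j => Finsupp.tsub_apply _ _ j
    rw [Finset.sum_congr rfl fun j _ => happ j]
    rw [← Finset.add_sum_erase Finset.univ _ (Finset.mem_univ i)] at hdeg ⊢
    have : ∀ j ∈ Finset.univ.erase i, d j - (Finsupp.single i 1) j = d j := by
      intro j hj
      rw [Finsupp.single_eq_of_ne' (Ne.symm (Finset.ne_of_mem_erase hj))]
      omega
    rw [Finset.sum_congr rfl this, Finsupp.single_eq_same]
    have h2 : (Finset.univ.erase i).sum ⇑d = ∑ x ∈ Finset.univ.erase i, d x := rfl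
    rw [h2]
    omega

lemma isHomog_Du {P : MvPolynomial (Fin n) ℝ} {m : ℕ} (hP : P.IsHomogeneous (m+1)) :
    (Du n u P).IsHomogeneous m := by
  unfold Du
  apply IsHomogeneous.sum
  intro i _
  rw [smul_eq_C_mul]
  exact (isHomog_pderiv hP i).C_mul _

lemma eq_C_of_homog0 {P : MvPolynomial (Fin n) ℝ} (hP : P.IsHomogeneous 0)
    (u : Fin n → ℝ) : P = C (eval u P) := by
  have h : P = C (P.coeff 0) := by
    apply MvPolynomial.ext
    intro d
    rcases eq_or_ne d 0 with rfl | hne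
    · simp [coeff_C]
    · rw [hP.coeff_eq_zero (fun hdeg => hne ((Finsupp.degree_eq_zero_iff d).mp hdeg)),
        coeff_C, if_neg (Ne.symm hne)]
  have he : eval u P = P.coeff 0 := by
    conv_lhs => rw [h]
    exact eval_C _
  rw [he]
  exact h

lemma gI_C (c : ℝ) : gI n (C c : MvPolynomial (Fin n) ℝ) = c := by
  rw [C_apply, gI_monomial]
  simp [gm]

lemma gI_one : gI n (1 : MvPolynomial (Fin n) ℝ) = 1 := by
  rw [← C_1, gI_C]

lemma gI_mul_hh_succ (P : MvPolynomial (Fin n) ℝ) (m : ℕ) :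
    gI n (P * hh n u (m+1)) = gI n (Du n u P * hh n u m) := by
  rw [show hh n u (m+1) = Lu n u * hh n u m - Du n u (hh n u m) from rfl]
  exact gI_adj P (hh n u m)

lemma gI_hh_sq (hu : ∑ i, u i ^ 2 = 1) :
    ∀ m, gI n (hh n u m * hh n u m) = (m.factorial : ℝ)
  | 0 => by rw [show hh n u 0 = 1 from rfl, one_mul, gI_one]; simp
  | (m+1) => by
      rw [gI_mul_hh_succ, Du_hh hu m, smul_mul_assoc, gI_smul, gI_hh_sq hu m]
      push_cast [Nat.factorial_succ]
      ring

lemma gI_F_hh (u : Fin n → ℝ) :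
    ∀ (j : ℕ) (P : MvPolynomial (Fin n) ℝ), P.IsHomogeneous j →
      gI n (P * hh n u j) = (j.factorial : ℝ) * eval u P
  | 0, P, hP => by
      rw [show hh n u 0 = 1 from rfl, mul_one]
      calc gI n P = gI n (C (eval u P)) := by conv_lhs => rw [eq_C_of_homog0 hP u]
        _ = eval u P := gI_C _
        _ = ((Nat.factorial 0 : ℕ) : ℝ) * eval u P := by simp
  | (j+1), P, hP => by
      rw [gI_mul_hh_succ, gI_F_hh u j (Du n u P) (isHomog_Du hP), euler_eval hP u]
      push_cast [Nat.factorial_succ]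
      ring

end Algebraic


end SupSphere

open SupSphere

/-- If `F` is a homogeneous polynomial of degree `k` with `ℒF = -kF`, then
`sup_{u ∈ S^{n-1}} |F(u)| ≤ (k!)^{-1/2} (∫ F² dγₙ)^{1/2}`. -/
theorem sup_sphere_le_of_ou_eigenfunction
    (n k : ℕ) (hk : 1 ≤ k) (F : MvPolynomial (Fin n) ℝ)
    (heig : OU n F = (-(k : ℝ)) • F) (hhom : F.IsHomogeneous k) :
    ∀ u : Fin n → ℝ, ∑ i, u i ^ 2 = 1 →
      |eval u F| ≤ (Real.sqrt (Nat.factorial k))⁻¹ *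
        Real.sqrt (∫ x, (eval x F) ^ 2 ∂(stdGaussian n)) := by
  intro u hu
  set t := eval u F with ht
  have hCS : (k.factorial : ℝ) * t^2 ≤ gI n (F * F) := by
    have expand : (F - t • hh n u k) * (F - t • hh n u k)
        = F * F - (2*t) • (F * hh n u k) + (t^2) • (hh n u k * hh n u k) := by
      simp only [smul_eq_C_mul, map_mul, map_pow, map_ofNat]; ring
    have h0 := gI_sq_nonneg (F - t • hh n u k)
    rw [expand, gI_add, gI_sub, gI_smul, gI_smul, gI_F_hh u k F hhom, gI_hh_sq hu k] at h0
    nlinarith [h0]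
  have hA : ∫ x, (eval x F)^2 ∂(stdGaussian n) = gI n (F * F) := by
    unfold gI
    congr 1
    funext x
    rw [map_mul, sq]
  have hfac : (0:ℝ) < (k.factorial : ℝ) := by exact_mod_cast k.factorial_pos
  have hA0 : 0 ≤ gI n (F * F) := gI_sq_nonneg F
  rw [hA]
  have ht2 : t^2 ≤ gI n (F * F) / (k.factorial : ℝ) := by
    rw [le_div_iff₀ hfac]
    nlinarith [hCS]
  calc |t| = Real.sqrt (t^2) := (Real.sqrt_sq_eq_abs _).symm
    _ ≤ Real.sqrt (gI n (F * F) / (k.factorial : ℝ)) := Real.sqrt_le_sqrt ht2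
    _ = Real.sqrt (gI n (F * F)) / Real.sqrt (k.factorial : ℝ) := Real.sqrt_div hA0 _
    _ = (Real.sqrt (Nat.factorial k))⁻¹ * Real.sqrt (gI n (F * F)) := by
        rw [div_eq_mul_inv, mul_comm]
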